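/- Hartogs' lemma for ℝ-rational functions: let A be a normal noetherian domain with quotient field F, and let x ∈ F^× ⊗_ℤ ℝ. If ord_Γ(x) ≥ 0 for all prime divisors Γ of A (height-one primes), then there exist x₁,…,x_r ∈ A \ {0} and a₁,…,a_r ∈ ℝ_{>0} with x = x₁^{a₁} ⋯ x_r^{a_r} in F^× ⊗_ℤ ℝ. -/

import Mathlib

set_option maxHeartbeats 1000000



lemma pow_trick {A : Type*} [CommRing A] [IsDomain A] [IsNoetherianRing A]
    [IsIntegrallyClosed A] {F : Type*} [Field F] [Algebra A F] [IsFractionRing A F]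
    (w : A) (hw : w ≠ 0) (z : F)
    (h : ∀ n : ℕ, ∃ e : A, z ^ n * algebraMap A F w = algebraMap A F e) :
    ∃ d : A, algebraMap A F d = z := by
  set f := algebraMap A F with hf
  have hfw : f w ≠ 0 := by
    intro h0
    apply hw
    apply IsFractionRing.injective A F
    rw [map_zero]; exact h0
  set N : Submodule A F := Submodule.span A {(f w)⁻¹} with hN
  have hzn : ∀ n : ℕ, z ^ n ∈ N := by
    intro n
    obtain ⟨e, he⟩ := h n
    have hz : z ^ n = e • (f w)⁻¹ := by
      rw [Algebra.smul_def, eq_mul_inv_iff_mul_eq₀ hfw, he]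
    rw [hz]
    exact N.smul_mem e (Submodule.mem_span_singleton_self _)
  have hle : Subalgebra.toSubmodule (Algebra.adjoin A {z}) ≤ N := by
    intro x hx
    have hx' : x ∈ Algebra.adjoin A {z} := hx
    rw [Algebra.adjoin_singleton_eq_range_aeval] at hx'
    obtain ⟨p, hp⟩ := hx'
    have hp' : Polynomial.aeval z p = x := hp
    rw [← hp', Polynomial.aeval_eq_sum_range]
    exact N.sum_mem fun i _ => N.smul_mem _ (hzn i)
  have hNfg : N.FG := Submodule.fg_span_singleton _
  haveI : IsNoetherian A N := isNoetherian_of_fg_of_noetherian N hNfg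
  have hfg : (Subalgebra.toSubmodule (Algebra.adjoin A {z})).FG := by
    have h1 : (Submodule.comap N.subtype
        (Subalgebra.toSubmodule (Algebra.adjoin A {z}))).FG :=
      IsNoetherian.noetherian _
    have h2 := h1.map N.subtype
    rwa [Submodule.map_comap_subtype, inf_eq_right.mpr hle] at h2
  have hint : IsIntegral A z :=
    IsIntegral.of_mem_of_fg _ hfg _ (Algebra.self_mem_adjoin_singleton A z)
  exact IsIntegrallyClosed.isIntegral_iff.mp hint

lemma hartogs_mem_range {A : Type*} [CommRing A] [IsDomain A] [IsNoetherianRing A]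
    [IsIntegrallyClosed A] {F : Type*} [Field F] [Algebra A F] [IsFractionRing A F]
    (u : Fˣ)
    (h : ∀ p : Ideal A, p.IsPrime → p ≠ ⊥ → (∀ q : Ideal A, q.IsPrime → q < p → q = ⊥) →
      ∃ a b : A, b ∉ p ∧ (u : F) * algebraMap A F b = algebraMap A F a) :
    (u : F) ∈ (algebraMap A F).range := by
  set f := algebraMap A F with hfdef
  have hinj : Function.Injective f := IsFractionRing.injective A F
  have hf0 : ∀ {x : A}, f x = 0 → x = 0 := by
    intro x hx; apply hinj; rw [hx, map_zero]
  obtain ⟨⟨a₀, b₀s⟩, hs⟩ := IsLocalization.surj (nonZeroDivisors A) (u : F)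
  set b₀ : A := (b₀s : A) with hb₀def
  have hs' : (u : F) * f b₀ = f a₀ := hs
  have hb₀ : b₀ ≠ 0 := nonZeroDivisors.ne_zero b₀s.2
  have hfb₀ : f b₀ ≠ 0 := fun h0 => hb₀ (hf0 h0)
  by_contra hu
  -- a₀ is not divisible by b₀
  have key : ¬ b₀ ∣ a₀ := by
    rintro ⟨d, hd⟩
    apply hu
    refine ⟨d, ?_⟩
    have : (u : F) * f b₀ = f d * f b₀ := by
      rw [hs', hd, map_mul]; ring
    have := mul_right_cancel₀ hfb₀ this
    exact this.symm
  -- the colon ideals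
  let col : A → Ideal A := fun c =>
    { carrier := {w | b₀ ∣ w * c}
      add_mem' := by
        intro x y hx hy
        simpa [add_mul] using dvd_add hx hy
      zero_mem' := by simp
      smul_mem' := by
        intro r x hx
        simp only [Set.mem_setOf_eq, smul_eq_mul] at *
        rw [mul_assoc]
        exact hx.mul_left r }
  have mem_col : ∀ {c w : A}, w ∈ col c ↔ b₀ ∣ w * c := fun {c w} => Iff.rfl
  set 𝒮 : Set (Ideal A) := {I | ∃ x : A, ¬ b₀ ∣ x * a₀ ∧ I = col (x * a₀)} with h𝒮
  have hSne : 𝒮.Nonempty := ⟨col (1 * a₀), 1, by simpa using key, rfl⟩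
  have hmaxex := (set_has_maximal_iff_noetherian.mpr
    (inferInstance : IsNoetherian A A)) 𝒮 hSne
  obtain ⟨p, ⟨x₀, hx₀, hpc⟩, hmax⟩ := hmaxex
  set c : A := x₀ * a₀ with hcdef
  -- basic facts
  have hb₀p : b₀ ∈ p := by rw [hpc]; exact mem_col.mpr ⟨c, rfl⟩
  have hpbot : p ≠ ⊥ := by
    intro hbot
    rw [hbot] at hb₀p
    exact hb₀ (by simpa using hb₀p)
  have hprime : Ideal.IsPrime p := by
    constructor
    · intro htop
      have h1 : (1 : A) ∈ p := htop ▸ Submodule.mem_top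
      rw [hpc, mem_col, one_mul] at h1
      exact hx₀ h1
    · intro v w hvw
      by_cases hw : w ∈ p
      · exact Or.inr hw
      · left
        have hwc : ¬ b₀ ∣ (w * x₀) * a₀ := by
          intro hdvd
          apply hw
          rw [hpc, mem_col]
          have heq : w * c = w * x₀ * a₀ := by ring
          rw [heq]; exact hdvd
        have hcol𝒮 : col ((w * x₀) * a₀) ∈ 𝒮 := ⟨w * x₀, hwc, rfl⟩
        have hle : p ≤ col ((w * x₀) * a₀) := by
          intro r hr
          rw [hpc, mem_col] at hr
          rw [mem_col]
          have : r * (w * x₀ * a₀) = w * (r * (x₀ * a₀)) := by ring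
          rw [this]
          exact hr.mul_left w
        have heq : p = col ((w * x₀) * a₀) := by
          by_contra hne
          exact hmax _ hcol𝒮 (lt_of_le_of_ne hle hne)
        rw [heq, mem_col]
        rw [hpc, mem_col] at hvw
        have : v * (w * x₀ * a₀) = (v * w) * (x₀ * a₀) := by ring
        rw [this]
        exact hvw
  have hcnd : ¬ b₀ ∣ c := hx₀
  -- the element z
  set z : F := f c * (f b₀)⁻¹ with hz
  have hz_not : ∀ d : A, f d ≠ z := by
    intro d hd
    apply hcnd
    have h1 : f d * f b₀ = f c := by
      rw [hd, hz, inv_mul_cancel_right₀ hfb₀]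
    refine ⟨d, (hinj ?_).symm⟩
    rw [map_mul, mul_comm (f b₀) (f d), ← h1]
  have hD : ∀ w ∈ p, ∃ e : A, z * f w = f e := by
    intro w hw
    rw [hpc, mem_col] at hw
    obtain ⟨e, he⟩ := hw
    refine ⟨e, ?_⟩
    rw [hz]
    field_simp
    rw [mul_comm (f c) (f w), ← map_mul, he, map_mul]
  -- uniqueness of the image
  have hDuniq : ∀ {w e e' : A}, z * f w = f e → z * f w = f e' → e = e' := by
    intro w e e' h1 h2
    exact hinj (h1 ▸ h2)
  -- Step: exists t ∈ p with image outside p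
  have hstep : ∃ t ∈ p, ∃ dt : A, z * f t = f dt ∧ dt ∉ p := by
    by_contra hstay
    push_neg at hstay
    have chain : ∀ n : ℕ, ∃ e : A, e ∈ p ∧ z ^ n * f b₀ = f e := by
      intro n
      induction n with
      | zero => exact ⟨b₀, hb₀p, by simp⟩
      | succ n ih =>
        obtain ⟨e, hep, hee⟩ := ih
        obtain ⟨e', he'⟩ := hD e hep
        refine ⟨e', hstay e hep e' he', ?_⟩
        rw [pow_succ]
        calc z ^ n * z * f b₀ = z * (z ^ n * f b₀) := by ring
        _ = z * f e := by rw [hee]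
        _ = f e' := he'
    obtain ⟨d, hd⟩ := pow_trick b₀ hb₀ z (fun n => (chain n).imp fun e he => he.2)
    exact hz_not d hd
  obtain ⟨t, htp, dt, hdt, hdtp⟩ := hstep
  -- height one
  have hht1 : ∀ q : Ideal A, q.IsPrime → q < p → q = ⊥ := by
    intro q hq hqp
    by_contra hqbot
    obtain ⟨w₀, hw₀q, hw₀⟩ := Submodule.ne_bot_iff _ |>.mp hqbot
    -- find t' ∈ p \ q with image outside p
    have hT' : ∃ t' ∈ p, t' ∉ q ∧ ∃ dt' : A, z * f t' = f dt' ∧ dt' ∉ p := by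
      obtain ⟨α, hαp, hαq⟩ := SetLike.exists_of_lt hqp
      by_cases htq : t ∈ q
      · obtain ⟨dα, hdα⟩ := hD α hαp
        by_cases hdαp : dα ∈ p
        · refine ⟨α + t, p.add_mem hαp htp, ?_, dα + dt, ?_, ?_⟩
          · intro hmem
            exact hαq (by simpa using q.sub_mem hmem htq)
          · rw [map_add, mul_add, hdα, hdt, map_add]
          · intro hmem
            exact hdtp (by simpa using p.sub_mem hmem hdαp)
        · exact ⟨α, hαp, hαq, dα, hdα, hdαp⟩
      · exact ⟨t, htp, htq, dt, hdt, hdtp⟩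
    obtain ⟨t', ht'p, ht'q, dt', hdt', hdt'p⟩ := hT'
    have ht'q' : t' ∉ q := ht'q
    have chain : ∀ n : ℕ, ∃ e : A, e ∈ q ∧ z ^ n * f w₀ = f e := by
      intro n
      induction n with
      | zero => exact ⟨w₀, hw₀q, by simp⟩
      | succ n ih =>
        obtain ⟨e, heq, hee⟩ := ih
        have hep : e ∈ p := le_of_lt hqp heq
        obtain ⟨e', he'⟩ := hD e hep
        have he'q : e' ∈ q := by
          have hmul : e' * t' = e * dt' := by
            apply hinj
            rw [map_mul, map_mul, ← he', ← hdt']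
            ring
          have : e' * t' ∈ q := hmul ▸ q.mul_mem_right dt' heq
          rcases hq.mem_or_mem this with h1 | h2
          · exact h1
          · exact absurd h2 ht'q'
        refine ⟨e', he'q, ?_⟩
        rw [pow_succ]
        calc z ^ n * z * f w₀ = z * (z ^ n * f w₀) := by ring
        _ = z * f e := by rw [hee]
        _ = f e' := he'
    obtain ⟨d, hd⟩ := pow_trick w₀ hw₀ z (fun n => (chain n).imp fun e he => he.2)
    exact hz_not d hd
  -- contradiction from h
  obtain ⟨a, b, hbp, hub⟩ := h p hprime hpbot hht1
  apply hbp
  rw [hpc, mem_col]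
  have hab : a₀ * b = a * b₀ := by
    apply hinj
    rw [map_mul, map_mul, ← hs', ← hub]
    ring
  refine ⟨x₀ * a, ?_⟩
  calc b * (x₀ * a₀) = x₀ * (a₀ * b) := by ring
  _ = x₀ * (a * b₀) := by rw [hab]
  _ = b₀ * (x₀ * a) := by ring


set_option maxHeartbeats 1000000 in
lemma cone_decomp (s P : ℕ) (M : Fin P → Fin s → ℤ) (c : Fin s → ℝ)
    (hc : ∀ p, 0 ≤ ∑ i, c i * (M p i : ℝ)) :
    ∃ (r : ℕ) (lam : Fin r → ℝ) (w : Fin r → Fin s → ℚ),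
      (∀ m, 0 ≤ lam m) ∧ (∀ i, c i = ∑ m, lam m * (w m i : ℝ)) ∧
      (∀ m p, (0:ℚ) ≤ ∑ i, w m i * (M p i : ℚ)) := by
  classical
  set V : Submodule ℚ ℝ := Submodule.span ℚ (Set.range c) with hV
  haveI : FiniteDimensional ℚ V := FiniteDimensional.span_of_finite ℚ (Set.finite_range c)
  set k := Module.finrank ℚ V with hk
  set B := Module.finBasis ℚ V with hB
  set u : Fin k → ℝ := fun j => ((B j : V) : ℝ) with hu
  have cVmem : ∀ i, c i ∈ V := fun i => Submodule.subset_span ⟨i, rfl⟩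
  set q : Fin s → Fin k → ℚ := fun i j => B.repr ⟨c i, cVmem i⟩ j with hq
  have hcq : ∀ i, c i = ∑ j, (q i j : ℝ) * u j := by
    intro i
    have h0 := B.sum_repr ⟨c i, cVmem i⟩
    have h1 : ((∑ j, B.repr ⟨c i, cVmem i⟩ j • B j : V) : ℝ) = c i := by rw [h0]
    rw [← h1, Submodule.coe_sum]
    apply Finset.sum_congr rfl
    intro j _
    rw [Submodule.coe_smul, Rat.smul_def]
  have hulin : LinearIndependent ℚ u :=
    B.linearIndependent.map' V.subtype (Submodule.ker_subtype V)
  set β : Fin P → Fin k → ℚ := fun p j => ∑ i, q i j * (M p i : ℚ) with hβ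
  set T : Fin P → ℝ := fun p => ∑ i, c i * (M p i : ℝ) with hT
  -- rational rearrangement
  have hswap : ∀ (ν : Fin k → ℚ) (p : Fin P),
      ∑ i, (∑ j, ν j * q i j) * (M p i : ℚ) = ∑ j, ν j * β p j := by
    intro ν p
    calc ∑ i, (∑ j, ν j * q i j) * (M p i : ℚ)
        = ∑ i, ∑ j, ν j * (q i j * (M p i : ℚ)) := by
          apply Finset.sum_congr rfl; intro i _
          rw [Finset.sum_mul]
          apply Finset.sum_congr rfl; intro j _; ring
      _ = ∑ j, ∑ i, ν j * (q i j * (M p i : ℚ)) := Finset.sum_comm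
      _ = ∑ j, ν j * β p j := by
          apply Finset.sum_congr rfl; intro j _
          rw [hβ, Finset.mul_sum]
  have hTβ : ∀ p, T p = ∑ j, (β p j : ℝ) * u j := by
    intro p
    calc T p = ∑ i, (∑ j, (q i j : ℝ) * u j) * (M p i : ℝ) := by
          apply Finset.sum_congr rfl; intro i _; rw [← hcq i]
      _ = ∑ i, ∑ j, ((q i j : ℝ) * (M p i : ℝ)) * u j := by
          apply Finset.sum_congr rfl; intro i _
          rw [Finset.sum_mul]
          apply Finset.sum_congr rfl; intro j _; ring
      _ = ∑ j, ∑ i, ((q i j : ℝ) * (M p i : ℝ)) * u j := Finset.sum_comm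
      _ = ∑ j, (β p j : ℝ) * u j := by
          apply Finset.sum_congr rfl; intro j _
          rw [← Finset.sum_mul]
          congr 1
          rw [hβ]
          push_cast
          rfl
  have htight : ∀ p, T p = 0 → ∀ j, β p j = 0 := by
    intro p hp0
    apply Fintype.linearIndependent_iff.mp hulin (β p)
    have : ∑ j, β p j • u j = ∑ j, (β p j : ℝ) * u j := by
      apply Finset.sum_congr rfl; intro j _; rw [Rat.smul_def]
    rw [this, ← hTβ p, hp0]
  -- the minimum of the loose values
  set L : Finset (Fin P) := Finset.univ.filter (fun p => 0 < T p) with hL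
  set ε₁ : ℝ := if hLne : L.Nonempty then L.inf' hLne T else 1 with hε₁
  have hε₁pos : 0 < ε₁ := by
    rw [hε₁]
    split_ifs with hLne
    · rw [Finset.lt_inf'_iff]
      intro p hp
      exact (Finset.mem_filter.mp hp).2
    · norm_num
  have hε₁le : ∀ p, 0 < T p → ε₁ ≤ T p := by
    intro p hp
    have hpL : p ∈ L := Finset.mem_filter.mpr ⟨Finset.mem_univ p, hp⟩
    rw [hε₁]
    rw [dif_pos ⟨p, hpL⟩]
    exact Finset.inf'_le T hpL
  -- the big constant
  set C : ℚ := 1 + ∑ p, ∑ j, |β p j| with hC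
  have hC1 : (1:ℚ) ≤ C := by
    rw [hC]
    have : (0:ℚ) ≤ ∑ p, ∑ j, |β p j| := by positivity
    linarith
  have hCR : (0:ℝ) < (C:ℝ) := by exact_mod_cast lt_of_lt_of_le one_pos hC1
  have hβC : ∀ p j, |β p j| ≤ C := by
    intro p j
    rw [hC]
    have h1 : |β p j| ≤ ∑ j', |β p j'| :=
      Finset.single_le_sum (f := fun j' => |β p j'|) (fun j' _ => abs_nonneg _)
        (Finset.mem_univ j)
    have h2 : ∑ j', |β p j'| ≤ ∑ p', ∑ j', |β p' j'| :=
      Finset.single_le_sum (f := fun p' => ∑ j', |β p' j'|)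
        (fun p' _ => Finset.sum_nonneg fun j' _ => abs_nonneg _) (Finset.mem_univ p)
    linarith
  have hβsum : ∀ p, ∑ j, |β p j| ≤ C := by
    intro p
    rw [hC]
    have h2 : ∑ j', |β p j'| ≤ ∑ p', ∑ j', |β p' j'| :=
      Finset.single_le_sum (f := fun p' => ∑ j', |β p' j'|)
        (fun p' _ => Finset.sum_nonneg fun j' _ => abs_nonneg _) (Finset.mem_univ p)
    linarith
  -- choose δ
  obtain ⟨δ, hδ0, hδlt⟩ := exists_rat_btwn (show (0:ℝ) < ε₁ / (2 * C) by positivity)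
  have hδpos : (0:ℚ) < δ := by exact_mod_cast hδ0
  have hδR : (0:ℝ) < (δ:ℝ) := by exact_mod_cast hδ0
  have hδC : (δ:ℝ) * C ≤ ε₁ / 2 := by
    have h2 : (δ:ℝ) * (2 * C) < ε₁ := (lt_div_iff₀ (by positivity)).mp hδlt
    have h3 : (δ:ℝ) * (2 * C) = 2 * ((δ:ℝ) * C) := by ring
    linarith
  -- choose rational approximations μ j with u j - ε₂ < μ j < u j
  set ε₂ : ℝ := min (ε₁ / (2 * C)) ((δ:ℝ) / (2 * ((k:ℝ) + 1))) with hε₂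
  have hε₂pos : 0 < ε₂ := by
    apply lt_min
    · positivity
    · positivity
  have hμex : ∀ j : Fin k, ∃ μ : ℚ, u j - ε₂ < (μ:ℝ) ∧ (μ:ℝ) < u j :=
    fun j => exists_rat_btwn (by linarith [hε₂pos] : u j - ε₂ < u j)
  choose μ hμ1 hμ2 using hμex
  set t : Fin k → ℝ := fun j => u j - (μ j : ℝ) with ht
  have htpos : ∀ j, 0 < t j := fun j => by rw [ht]; simp only; linarith [hμ2 j]
  have htlt : ∀ j, t j < ε₂ := fun j => by rw [ht]; simp only; linarith [hμ1 j]
  set z : Fin s → ℚ := fun i => ∑ j, μ j * q i j with hz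
  have hδne : (δ:ℝ) ≠ 0 := ne_of_gt hδR
  set lam' : Option (Fin k) → ℝ :=
    fun o => o.elim (1 - (∑ j, t j) / (δ:ℝ)) (fun j => t j / (δ:ℝ)) with hlam'
  set w' : Option (Fin k) → Fin s → ℚ :=
    fun o => o.elim z (fun j i => z i + δ * q i j) with hw'
  have htsum : ∑ j, t j ≤ (δ:ℝ) / 2 := by
    have h2 : ∑ j, t j ≤ ∑ _j : Fin k, ε₂ :=
      Finset.sum_le_sum (fun j _ => le_of_lt (htlt j))
    have h2' : ∑ _j : Fin k, ε₂ = (k:ℝ) * ε₂ := by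
      rw [Finset.sum_const, Finset.card_univ, Fintype.card_fin, nsmul_eq_mul]
    have h3 : (k:ℝ) * ε₂ ≤ (k:ℝ) * ((δ:ℝ)/(2*((k:ℝ)+1))) :=
      mul_le_mul_of_nonneg_left (min_le_right _ _) (Nat.cast_nonneg k)
    have h4 : (k:ℝ) * ((δ:ℝ)/(2*((k:ℝ)+1))) ≤ (δ:ℝ)/2 := by
      rw [mul_div_assoc', div_le_div_iff₀ (by positivity) (by norm_num)]
      nlinarith [hδR, Nat.cast_nonneg (α := ℝ) k]
    linarith
  have hlam₀ : (1:ℝ)/2 ≤ 1 - (∑ j, t j) / (δ:ℝ) := by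
    have h5 : (∑ j, t j) / (δ:ℝ) ≤ 1/2 := by
      rw [div_le_iff₀ hδR]
      linarith
    linarith
  have hlamnn : ∀ o, 0 ≤ lam' o := by
    intro o
    rcases o with _ | j
    · simp only [hlam', Option.elim]
      linarith
    · simp only [hlam', Option.elim]
      exact div_nonneg (le_of_lt (htpos j)) (le_of_lt hδR)
  have hzreal : ∀ i, ((z i : ℚ) : ℝ) = ∑ j, (μ j:ℝ) * (q i j:ℝ) := by
    intro i
    simp only [hz]
    push_cast
    rfl
  -- decomposition
  have hdec : ∀ i, c i = ∑ o : Option (Fin k), lam' o * ((w' o i : ℚ) : ℝ) := by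
    intro i
    have key : (z i : ℝ) + ∑ j, t j * (q i j : ℝ) = c i := by
      rw [hzreal i]
      rw [hcq i, ← Finset.sum_add_distrib]
      apply Finset.sum_congr rfl
      intro j _
      simp only [ht]
      ring
    have h1 : lam' none * ((w' none i : ℚ):ℝ) = (1 - (∑ j, t j)/(δ:ℝ)) * ((z i : ℚ) : ℝ) := rfl
    have h2 : ∀ j, lam' (some j) * ((w' (some j) i : ℚ):ℝ)
        = t j/(δ:ℝ) * ((z i : ℚ) : ℝ) + t j * (q i j : ℝ) := by
      intro j
      have hcast : ((w' (some j) i : ℚ):ℝ) = ((z i:ℚ) : ℝ) + (δ:ℝ) * (q i j : ℝ) := by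
        simp only [hw', Option.elim]
        push_cast
        ring
      show lam' (some j) * _ = _
      rw [hcast]
      simp only [hlam', Option.elim]
      field_simp
    rw [Fintype.sum_option, h1, Finset.sum_congr rfl (fun j _ => h2 j),
      Finset.sum_add_distrib, ← Finset.sum_mul, ← Finset.sum_div, ← key]
    ring
  -- constraints
  have hznT : ∀ p, T p = 0 → ∑ i, z i * (M p i:ℚ) = 0 := by
    intro p hp
    have h0 : ∑ i, z i * (M p i:ℚ) = ∑ j, μ j * β p j := by
      simp only [hz]
      exact hswap μ p
    rw [h0]
    apply Finset.sum_eq_zero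
    intro j _
    rw [htight p hp j, mul_zero]
  have hlooseZ : ∀ p, 0 < T p → (ε₁/2 : ℝ) ≤ ((∑ i, z i * (M p i:ℚ) : ℚ) : ℝ) := by
    intro p hp
    have hval : ((∑ i, z i * (M p i:ℚ) : ℚ) : ℝ) = ∑ j, (μ j:ℝ) * (β p j:ℝ) := by
      have h0 : ∑ i, z i * (M p i:ℚ) = ∑ j, μ j * β p j := by
        simp only [hz]; exact hswap μ p
      rw [h0]
      push_cast
      rfl
    have hTp : T p = ∑ j, u j * (β p j : ℝ) := by
      rw [hTβ p]
      apply Finset.sum_congr rfl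
      intro j _
      ring
    have hdiff : T p - ((∑ i, z i * (M p i:ℚ) : ℚ):ℝ) = ∑ j, t j * (β p j:ℝ) := by
      rw [hval, hTp, ← Finset.sum_sub_distrib]
      apply Finset.sum_congr rfl
      intro j _
      simp only [ht]
      ring
    have hbound : ∑ j, t j * (β p j:ℝ) ≤ ε₁/2 := by
      have h1 : ∀ j ∈ Finset.univ, t j * (β p j :ℝ) ≤ ε₂ * |(β p j:ℝ)| := by
        intro j _
        have hb1 : (β p j:ℝ) ≤ |(β p j:ℝ)| := le_abs_self _
        have := htpos j
        have := htlt j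
        nlinarith [abs_nonneg (β p j:ℝ)]
      have hsums : ∑ j, |(β p j:ℝ)| ≤ (C:ℝ) := by
        have := hβsum p
        push_cast
        exact_mod_cast this
      have hCne : (C:ℝ) ≠ 0 := ne_of_gt hCR
      have e1 : ∑ j, ε₂ * |(β p j:ℝ)| = ε₂ * ∑ j, |(β p j:ℝ)| := (Finset.mul_sum _ _ _).symm
      have e2 : ε₂ * (∑ j, |(β p j:ℝ)|) ≤ (ε₁/(2*C)) * (C:ℝ) :=
        mul_le_mul (min_le_left _ _) hsums
          (Finset.sum_nonneg fun j _ => abs_nonneg _)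
          (div_nonneg (le_of_lt hε₁pos) (by linarith))
      have e3 : (ε₁/(2*(C:ℝ))) * (C:ℝ) = ε₁/2 := by
        rw [div_mul_eq_mul_div, mul_comm 2 (C:ℝ), ← div_div, mul_div_assoc,
          div_self hCne, mul_one]
      have e4 := Finset.sum_le_sum h1
      linarith
    linarith [hε₁le p hp]
  have hsplit : ∀ (j : Fin k) p, ∑ i, (z i + δ * q i j) * (M p i:ℚ)
      = (∑ i, z i * (M p i:ℚ)) + δ * β p j := by
    intro j p
    calc ∑ i, (z i + δ * q i j) * (M p i:ℚ)
        = ∑ i, (z i * (M p i:ℚ) + δ * (q i j * (M p i:ℚ))) := by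
          apply Finset.sum_congr rfl; intro i _; ring
      _ = (∑ i, z i * (M p i:ℚ)) + ∑ i, δ * (q i j * (M p i:ℚ)) := Finset.sum_add_distrib
      _ = (∑ i, z i * (M p i:ℚ)) + δ * β p j := by
          rw [← Finset.mul_sum]
  have hcons : ∀ o p, (0:ℚ) ≤ ∑ i, w' o i * (M p i : ℚ) := by
    intro o p
    have hTnn : 0 ≤ T p := hc p
    rcases hTnn.eq_or_lt with hp0 | hp1
    · rcases o with _ | j
      · simp only [hw', Option.elim]
        rw [hznT p hp0.symm]
      · simp only [hw', Option.elim]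
        rw [hsplit j p, hznT p hp0.symm, htight p hp0.symm j, mul_zero, add_zero]
    · rcases o with _ | j
      · simp only [hw', Option.elim]
        have h1 := hlooseZ p hp1
        have h2 : (0:ℝ) ≤ ((∑ i, z i * (M p i:ℚ) : ℚ) : ℝ) := by linarith [hε₁pos]
        exact_mod_cast h2
      · simp only [hw', Option.elim]
        rw [hsplit j p]
        have h1 := hlooseZ p hp1
        have hβR : -(C:ℝ) ≤ ((β p j : ℚ):ℝ) := by
          have := (abs_le.mp (hβC p j)).1
          exact_mod_cast this
        have h3 : -((δ:ℝ) * (C:ℝ)) ≤ (δ:ℝ) * ((β p j:ℚ):ℝ) := by nlinarith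
        have h4 : (0:ℝ) ≤ ((∑ i, z i * (M p i:ℚ) : ℚ):ℝ) + (δ:ℝ) * ((β p j:ℚ):ℝ) := by
          linarith [hδC]
        exact_mod_cast h4
  -- transport to a `Fin` index
  refine ⟨Fintype.card (Option (Fin k)),
    (fun m => lam' ((Fintype.equivFin (Option (Fin k))).symm m)),
    (fun m => w' ((Fintype.equivFin (Option (Fin k))).symm m)), ?_, ?_, ?_⟩
  · intro m; exact hlamnn _
  · intro i
    rw [hdec i]
    exact (Equiv.sum_comp (Fintype.equivFin (Option (Fin k))).symm
      (fun o => lam' o * ((w' o i : ℚ):ℝ))).symm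
  · intro m p
    exact hcons _ p


lemma clear_denoms (s : ℕ) (w : Fin s → ℚ) :
    ∃ (N : ℕ) (mv : Fin s → ℤ), 0 < N ∧ ∀ i, (mv i : ℚ) = N * w i := by
  classical
  refine ⟨∏ i, (w i).den, fun i => (w i).num * (((∏ i', (w i').den) / (w i).den : ℕ) : ℤ),
    Finset.prod_pos fun i _ => (w i).pos, ?_⟩
  intro i
  obtain ⟨R, hR⟩ : (w i).den ∣ ∏ i', (w i').den :=
    Finset.dvd_prod_of_mem _ (Finset.mem_univ i)
  simp only
  rw [hR, Nat.mul_div_cancel_left _ (w i).pos]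
  have hden : ((w i).den : ℚ) ≠ 0 := by
    exact_mod_cast (w i).den_nz
  push_cast
  have key : ((w i).den : ℚ) * w i = (w i).num := by
    rw [mul_comm]
    exact_mod_cast Rat.mul_den_eq_num (w i)
  linear_combination (-(R:ℚ)) * key



open TensorProduct

/-- Hartogs' lemma for ℝ-rational functions. Let `A` be a normal
(integrally closed) noetherian domain with quotient field `F`.  For each height-one prime
`p` let `ord p : F^× → ℤ` be the associated discrete valuation (characterized by
`ord p u ≥ 0 ↔ u ∈ A_p`).  Let `x = y₁^{c₁} ⋯ y_s^{c_s} ∈ F^× ⊗_ℤ ℝ`.  If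
`ord_p(x) ≥ 0` for all height-one primes `p`, then there are `x₁, …, x_r ∈ A \ {0}` and
`a₁, …, a_r > 0` with `x = x₁^{a₁} ⋯ x_r^{a_r}` in `F^× ⊗_ℤ ℝ`. -/
theorem stmt6 {A : Type*} [CommRing A] [IsDomain A] [IsNoetherianRing A]
    [IsIntegrallyClosed A]
    (F : Type*) [Field F] [Algebra A F] [IsFractionRing A F]
    (ord : Ideal A → (Additive Fˣ →+ ℤ))
    (hord : ∀ p : Ideal A, p.IsPrime → p ≠ ⊥ →
      (∀ q : Ideal A, q.IsPrime → q < p → q = ⊥) →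
      ∀ u : Fˣ, (0 ≤ ord p (Additive.ofMul u) ↔
        ∃ a b : A, b ∉ p ∧ (u : F) * algebraMap A F b = algebraMap A F a))
    (s : ℕ) (y : Fin s → Fˣ) (c : Fin s → ℝ)
    (hpos : ∀ p : Ideal A, p.IsPrime → p ≠ ⊥ →
      (∀ q : Ideal A, q.IsPrime → q < p → q = ⊥) →
      0 ≤ ∑ i, c i * (ord p (Additive.ofMul (y i)) : ℝ)) :
    ∃ (r : ℕ) (x : Fin r → Fˣ) (a : Fin r → ℝ),
      (∀ i, (x i : F) ∈ (algebraMap A F).range) ∧ (∀ i, 0 < a i) ∧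
      (∑ i, c i ⊗ₜ[ℤ] Additive.ofMul (y i) : ℝ ⊗[ℤ] Additive Fˣ)
        = ∑ i, a i ⊗ₜ[ℤ] Additive.ofMul (x i) := by
  classical
  set f := algebraMap A F with hfdef
  -- choose fractional representations of the y i
  have hrep : ∀ i, ∃ (a b : A), b ≠ 0 ∧ (y i : F) * f b = f a ∧ a ≠ 0 := by
    intro i
    obtain ⟨⟨a, bs⟩, hb⟩ := IsLocalization.surj (nonZeroDivisors A) ((y i : F))
    have hb' : (y i : F) * f (bs : A) = f a := hb
    have hbne : (bs : A) ≠ 0 := nonZeroDivisors.ne_zero bs.2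
    refine ⟨a, bs, hbne, hb', ?_⟩
    intro ha0
    rw [ha0, map_zero] at hb'
    have hfb : f (bs : A) ≠ 0 := fun h0 => hbne (IsFractionRing.injective A F (by rw [h0, map_zero]))
    rcases mul_eq_zero.mp hb' with h1 | h2
    · exact Units.ne_zero (y i) h1
    · exact hfb h2
  choose α βd hβne hyrep hαne using hrep
  set g : A := ∏ i, α i * βd i with hg
  have hgne : g ≠ 0 := Finset.prod_ne_zero_iff.mpr fun i _ => mul_ne_zero (hαne i) (hβne i)
  -- ord of the y i vanishes at height-one primes not containing g
  have hvanish : ∀ p : Ideal A, p.IsPrime → p ≠ ⊥ →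
      (∀ q : Ideal A, q.IsPrime → q < p → q = ⊥) →
      g ∉ p → ∀ i, ord p (Additive.ofMul (y i)) = 0 := by
    intro p hp hpb hp1 hgp i
    have hdvd : α i * βd i ∣ g := Finset.dvd_prod_of_mem _ (Finset.mem_univ i)
    obtain ⟨rr, hrr⟩ := hdvd
    have hαp : α i ∉ p := by
      intro hmem
      exact hgp (by rw [hg] at hrr ⊢; rw [hrr, mul_assoc]; exact Ideal.mul_mem_right _ _ hmem)
    have hβp : βd i ∉ p := by
      intro hmem
      exact hgp (by
        rw [hg] at hrr ⊢
        rw [hrr]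
        have : α i * βd i * rr = βd i * (α i * rr) := by ring
        rw [this]
        exact Ideal.mul_mem_right _ _ hmem)
    have h1 : 0 ≤ ord p (Additive.ofMul (y i)) :=
      (hord p hp hpb hp1 (y i)).mpr ⟨α i, βd i, hβp, hyrep i⟩
    have h2 : 0 ≤ ord p (Additive.ofMul (y i)⁻¹) := by
      apply (hord p hp hpb hp1 (y i)⁻¹).mpr
      refine ⟨βd i, α i, hαp, ?_⟩
      have hyne : ((y i : F)) ≠ 0 := Units.ne_zero _
      have hv : (((y i)⁻¹ : Fˣ) : F) = ((y i : F))⁻¹ := Units.val_inv_eq_inv_val _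
      rw [hv, inv_mul_eq_iff_eq_mul₀ hyne, ← hyrep i]
    have h3 : ord p (Additive.ofMul (y i)⁻¹) = - ord p (Additive.ofMul (y i)) := by
      rw [ofMul_inv, map_neg]
    omega
  -- the finite set of relevant primes
  set Pset : Set (Ideal A) :=
    {p | (p.IsPrime ∧ p ≠ ⊥ ∧ ∀ q : Ideal A, q.IsPrime → q < p → q = ⊥) ∧ g ∈ p} with hPset
  have hPsub : Pset ⊆ (Ideal.span {g} : Ideal A).minimalPrimes := by
    rintro p ⟨⟨hp, hpb, hp1⟩, hgp⟩
    constructor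
    · exact ⟨hp, (Ideal.span_singleton_le_iff_mem _).mpr hgp⟩
    · rintro q ⟨hq, hq2⟩ hqp
      have hgq : g ∈ q := hq2 (Ideal.subset_span rfl)
      have hqb : q ≠ ⊥ := by
        intro h0
        rw [h0] at hgq
        exact hgne (by simpa using hgq)
      rcases eq_or_lt_of_le hqp with heq | hlt
      · rw [heq]
      · exact absurd (hp1 q hq hlt) hqb
  have hminfin : ((Ideal.span {g} : Ideal A).minimalPrimes).Finite := by
    rw [Ideal.minimalPrimes_eq_comap]
    exact (minimalPrimes.finite_of_isNoetherianRing _).image _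
  have hPfin : Pset.Finite := hminfin.subset hPsub
  haveI hPfty : Fintype ↥Pset := hPfin.fintype
  set P : ℕ := Fintype.card ↥Pset with hP
  set e : ↥Pset ≃ Fin P := Fintype.equivFin ↥Pset with he
  set M : Fin P → Fin s → ℤ :=
    fun m i => ord ((e.symm m : ↥Pset) : Ideal A) (Additive.ofMul (y i)) with hM
  have hcpos : ∀ m, 0 ≤ ∑ i, c i * (M m i : ℝ) := by
    intro m
    obtain ⟨⟨hp, hpb, hp1⟩, _⟩ := (e.symm m).2
    exact hpos _ hp hpb hp1
  obtain ⟨r, lam, w, hlam0, hdecomp, hwM⟩ := cone_decomp s P M c hcpos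
  -- patch zero coefficients
  set lam' : Fin r → ℝ := fun m => if lam m = 0 then 1 else lam m with hlam'
  set w' : Fin r → Fin s → ℚ := fun m => if lam m = 0 then 0 else w m with hw'
  have hlam'pos : ∀ m, 0 < lam' m := by
    intro m
    rw [hlam']
    simp only
    split_ifs with h
    · norm_num
    · exact lt_of_le_of_ne (hlam0 m) (Ne.symm h)
  have hdecomp' : ∀ i, c i = ∑ m, lam' m * ((w' m i : ℚ) : ℝ) := by
    intro i
    rw [hdecomp i]
    apply Finset.sum_congr rfl
    intro m _
    by_cases h : lam m = 0 <;> simp [hlam', hw', h]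
  have hwM' : ∀ m p, (0:ℚ) ≤ ∑ i, w' m i * (M p i : ℚ) := by
    intro m p
    by_cases h : lam m = 0 <;> simp [hw', h]
    exact hwM m p
  -- constraints at every height-one prime
  have hwall : ∀ m (p : Ideal A), p.IsPrime → p ≠ ⊥ →
      (∀ q : Ideal A, q.IsPrime → q < p → q = ⊥) →
      (0:ℚ) ≤ ∑ i, w' m i * ((ord p (Additive.ofMul (y i)) : ℤ) : ℚ) := by
    intro m p hp hpb hp1
    by_cases hgp : g ∈ p
    · have hpP : p ∈ Pset := ⟨⟨hp, hpb, hp1⟩, hgp⟩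
      have h1 := hwM' m (e ⟨p, hpP⟩)
      have h2 : ∀ i, M (e ⟨p, hpP⟩) i = ord p (Additive.ofMul (y i)) := by
        intro i
        rw [hM]
        simp only [e.symm_apply_apply]
      calc (0:ℚ) ≤ ∑ i, w' m i * (M (e ⟨p, hpP⟩) i : ℚ) := h1
        _ = ∑ i, w' m i * ((ord p (Additive.ofMul (y i)) : ℤ) : ℚ) := by
            apply Finset.sum_congr rfl
            intro i _
            rw [h2 i]
    · have h0 : ∀ i, ord p (Additive.ofMul (y i)) = 0 := hvanish p hp hpb hp1 hgp
      apply le_of_eq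
      symm
      apply Finset.sum_eq_zero
      intro i _
      rw [h0 i]
      norm_num
  -- clear denominators
  choose N mv hNpos hmv using fun m => clear_denoms s (w' m)
  set x : Fin r → Fˣ :=
    fun m => Additive.toMul (∑ i, mv m i • Additive.ofMul (y i)) with hx
  have hofx : ∀ m, Additive.ofMul (x m) = ∑ i, mv m i • Additive.ofMul (y i) := by
    intro m
    rw [hx]
    exact ofMul_toMul _
  have hordx : ∀ m (p : Ideal A), p.IsPrime → p ≠ ⊥ →
      (∀ q : Ideal A, q.IsPrime → q < p → q = ⊥) →
      0 ≤ ord p (Additive.ofMul (x m)) := by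
    intro m p hp hpb hp1
    have h1 : ord p (Additive.ofMul (x m)) = ∑ i, mv m i * ord p (Additive.ofMul (y i)) := by
      rw [hofx m, map_sum]
      apply Finset.sum_congr rfl
      intro i _
      rw [map_zsmul, smul_eq_mul]
    rw [h1]
    have h2 : (0:ℚ) ≤ ((∑ i, mv m i * ord p (Additive.ofMul (y i)) : ℤ) : ℚ) := by
      push_cast
      have h3 : (0:ℚ) ≤ (N m : ℚ) * ∑ i, w' m i * ((ord p (Additive.ofMul (y i)) : ℤ) : ℚ) :=
        mul_nonneg (by positivity) (hwall m p hp hpb hp1)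
      calc (0:ℚ) ≤ (N m : ℚ) * ∑ i, w' m i * ((ord p (Additive.ofMul (y i)) : ℤ) : ℚ) := h3
        _ = ∑ i, ((mv m i : ℚ)) * ((ord p (Additive.ofMul (y i)) : ℤ) : ℚ) := by
            rw [Finset.mul_sum]
            apply Finset.sum_congr rfl
            intro i _
            rw [hmv m i]
            ring
    exact_mod_cast h2
  refine ⟨r, x, fun m => lam' m / (N m : ℝ), ?_, ?_, ?_⟩
  · intro m
    apply hartogs_mem_range (x m)
    intro p hp hpb hp1
    exact (hord p hp hpb hp1 (x m)).mp (hordx m p hp hpb hp1)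
  · intro m
    apply div_pos (hlam'pos m)
    exact_mod_cast hNpos m
  · calc (∑ i, c i ⊗ₜ[ℤ] Additive.ofMul (y i) : ℝ ⊗[ℤ] Additive Fˣ)
        = ∑ i, (∑ m, lam' m * ((w' m i : ℚ) : ℝ)) ⊗ₜ[ℤ] Additive.ofMul (y i) := by
          apply Finset.sum_congr rfl
          intro i _
          rw [← hdecomp' i]
      _ = ∑ i, ∑ m, (lam' m * ((w' m i : ℚ) : ℝ)) ⊗ₜ[ℤ] Additive.ofMul (y i) := by
          apply Finset.sum_congr rfl
          intro i _
          rw [TensorProduct.sum_tmul]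
      _ = ∑ m, ∑ i, (lam' m * ((w' m i : ℚ) : ℝ)) ⊗ₜ[ℤ] Additive.ofMul (y i) :=
          Finset.sum_comm
      _ = ∑ m, (lam' m / (N m : ℝ)) ⊗ₜ[ℤ] Additive.ofMul (x m) := by
          apply Finset.sum_congr rfl
          intro m _
          rw [hofx m, TensorProduct.tmul_sum]
          apply Finset.sum_congr rfl
          intro i _
          have hNne : (N m : ℝ) ≠ 0 := by
            have := hNpos m
            positivity
          have hmvr : ((mv m i : ℤ) : ℝ) = (N m : ℝ) * ((w' m i : ℚ) : ℝ) := by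
            exact_mod_cast hmv m i
          have hcoef : lam' m * ((w' m i : ℚ) : ℝ) = (mv m i : ℤ) • (lam' m / (N m : ℝ)) := by
            rw [zsmul_eq_mul, hmvr]
            field_simp
          rw [hcoef, ← TensorProduct.smul_tmul', ← TensorProduct.tmul_smul]
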